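/- Let G₁ be a tournament of size n-1 (n = 4k+3) whose Seidel matrix S₁ has eigenvalues √n, 1, -1, -√n with multiplicities (n-3)/2, 1, 1, (n-3)/2 and main angles 0, 1/√2, 1/√2, 0 respectively. Then G₁ is almost regular, i.e., exactly (n-1)/2 vertices have out-degree (n-1)/2 and exactly (n-1)/2 vertices have out-degree (n-3)/2. -/

import Mathlib

open Matrix Polynomial

noncomputable section

def IsTournament {n : ℕ} (A : Matrix (Fin n) (Fin n) ℝ) : Prop :=
  (∀ i j, A i j = 0 ∨ A i j = 1) ∧ (∀ i, A i i = 0) ∧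
    A + Aᵀ = (Matrix.of fun _ _ => (1:ℝ)) - 1

def Seidel {n : ℕ} (A : Matrix (Fin n) (Fin n) ℝ) : Matrix (Fin n) (Fin n) ℂ :=
  Complex.I • ((A - Aᵀ).map Complex.ofReal)

def IsDoublyRegular {n : ℕ} (A : Matrix (Fin n) (Fin n) ℝ) : Prop :=
  A.mulVec (fun _ => 1) = (fun _ => ((n : ℝ) - 1) / 2) ∧
  A * Aᵀ = (((n : ℝ) + 1) / 4) • 1 + (((n : ℝ) - 3) / 4) • Matrix.of fun _ _ => 1

def eigSpace {n : ℕ} (S : Matrix (Fin n) (Fin n) ℂ) (θ : ℂ) :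
    Submodule ℂ (EuclideanSpace ℂ (Fin n)) :=
  Module.End.eigenspace (Matrix.toEuclideanLin S) θ

def onesE (n : ℕ) : EuclideanSpace ℂ (Fin n) := WithLp.toLp 2 (fun _ => 1)

def mainAngleSq {n : ℕ} (S : Matrix (Fin n) (Fin n) ℂ) (θ : ℂ) : ℝ :=
  ‖(Submodule.orthogonalProjection (eigSpace S θ) (onesE n) : EuclideanSpace ℂ (Fin n))‖ ^ 2 / n

/-! ### Auxiliary lemmas -/

lemma cx_dot_zero {m : ℕ} {v : Fin m → ℂ} (h : star v ⬝ᵥ v = 0) : v = 0 := by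
  have h1 : ((∑ i, Complex.normSq (v i) : ℝ) : ℂ) = 0 := by
    rw [Complex.ofReal_sum]
    simpa [dotProduct, Pi.star_apply, Complex.star_def,
      Complex.normSq_eq_conj_mul_self] using h
  have h2 : ∑ i, Complex.normSq (v i) = 0 := by exact_mod_cast h1
  have h3 := (Finset.sum_eq_zero_iff_of_nonneg (fun i _ => Complex.normSq_nonneg (v i))).mp h2
  funext i
  exact Complex.normSq_eq_zero.mp (h3 i (Finset.mem_univ i))

lemma herm_cancel {m : ℕ} {M : Matrix (Fin m) (Fin m) ℂ} (hM : M.IsHermitian)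
    {x : Fin m → ℂ} (h : M *ᵥ (M *ᵥ x) = 0) : M *ᵥ x = 0 := by
  apply cx_dot_zero
  rw [star_mulVec, dotProduct_mulVec, vecMul_vecMul, ← dotProduct_mulVec, hM.eq,
    ← mulVec_mulVec, h, dotProduct_zero]

lemma herm_descent {m : ℕ} {M : Matrix (Fin m) (Fin m) ℂ} (hM : M.IsHermitian)
    (j : ℕ) : ∀ (x : Fin m → ℂ), (M^(j+1)) *ᵥ x = 0 → M *ᵥ x = 0 := by
  induction j with
  | zero => intro x h; simpa using h
  | succ j ih =>
    intro x h
    have h1 : (M^(j+1)) *ᵥ (M *ᵥ x) = 0 := by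
      rw [mulVec_mulVec, ← pow_succ]; exact h
    exact herm_cancel hM (ih _ h1)

lemma charpoly_factor {k : ℕ} (S : Matrix (Fin (4*k+2)) (Fin (4*k+2)) ℂ) (r : ℂ)
    (hr1 : r ≠ 1) (hr2 : r ≠ -1) (hr0 : r ≠ 0)
    (h1 : S.charpoly.rootMultiplicity r = 2*k)
    (h2 : S.charpoly.rootMultiplicity 1 = 1)
    (h3 : S.charpoly.rootMultiplicity (-1) = 1)
    (h4 : S.charpoly.rootMultiplicity (-r) = 2*k) :
    (S^2 - (r*r) • 1)^(2*k) * (S^2 - 1) = 0 := by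
  set p := S.charpoly with hp
  have hmonic : p.Monic := S.charpoly_monic
  have hdeg : p.natDegree = 4*k+2 := by
    rw [hp, S.charpoly_natDegree_eq_dim, Fintype.card_fin]
  have hsplits : p.Splits := IsAlgClosed.splits p
  have hcard : Multiset.card p.roots = 4*k+2 := by
    rw [(Polynomial.splits_iff_card_roots).mp hsplits, hdeg]
  have hne : p ≠ 0 := hmonic.ne_zero
  have c1 : Multiset.count r p.roots = 2*k := by rw [Polynomial.count_roots]; exact h1
  have c2 : Multiset.count 1 p.roots = 1 := by rw [Polynomial.count_roots]; exact h2
  have c3 : Multiset.count (-1) p.roots = 1 := by rw [Polynomial.count_roots]; exact h3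
  have c4 : Multiset.count (-r) p.roots = 2*k := by rw [Polynomial.count_roots]; exact h4
  have d1 : (1 : ℂ) ≠ -1 := by norm_num
  have d2 : -r ≠ 1 := fun h => hr2 (by rw [← neg_neg r, h])
  have d3 : -r ≠ -1 := fun h => hr1 (neg_injective h)
  have d4 : r ≠ -r := fun h => hr0 (by linear_combination h/2)
  set t : Multiset ℂ := Multiset.replicate (2*k) r +
    (Multiset.replicate (2*k) (-r) + (1 ::ₘ {-1})) with ht
  have hle : t ≤ p.roots := by
    rw [Multiset.le_iff_count]
    intro a
    rw [ht]
    simp only [Multiset.count_add, Multiset.count_replicate, Multiset.count_cons,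
      Multiset.count_singleton]
    by_cases ha1 : a = r
    · subst ha1; simp [d4, Ne.symm d4, hr1, Ne.symm hr1, hr2, Ne.symm hr2, c1]
    · by_cases ha2 : a = -r
      · subst ha2; simp [d4, Ne.symm d4, d2, Ne.symm d2, d3, Ne.symm d3, c4]
      · by_cases ha3 : a = 1
        · subst ha3; simp [hr1, Ne.symm hr1, d2, Ne.symm d2, d1, Ne.symm d1, c2]
        · by_cases ha4 : a = -1
          · subst ha4; simp [hr2, Ne.symm hr2, d3, Ne.symm d3, d1, Ne.symm d1, c3]
          · simp [Ne.symm ha1, Ne.symm ha2, ha3, ha4]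
  have hroots : p.roots = t := by
    refine (Multiset.eq_of_le_of_card_le hle ?_).symm
    rw [hcard, ht]
    simp [Multiset.card_replicate]; omega
  have hfac : p = (X - C r)^(2*k) * ((X - C (-r))^(2*k) * ((X - C 1) * (X - C (-1)))) := by
    conv_lhs => rw [hsplits.eq_prod_roots_of_monic hmonic]
    rw [hroots, ht]
    simp [Multiset.map_replicate, Multiset.prod_replicate]; ring
  have hfac2 : p = (X^2 - C (r*r))^(2*k) * ((X^2 - 1)) := by
    have key : (X - C r) * (X + C r) = X^2 - C (r*r) := by
      rw [_root_.map_mul]; ring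
    rw [hfac]
    simp only [map_neg, _root_.map_one, sub_neg_eq_add]
    rw [show (X^2 - C (r*r))^(2*k) = (X - C r)^(2*k) * (X + C r)^(2*k) from by
      rw [← mul_pow, key]]
    ring
  have := S.aeval_self_charpoly
  rw [← hp, hfac2] at this
  simpa [Algebra.algebraMap_eq_smul_one, sq, smul_smul] using this

lemma seidel_herm {n : ℕ} (A : Matrix (Fin n) (Fin n) ℝ) : (Seidel A).IsHermitian := by
  unfold Matrix.IsHermitian
  ext i j
  simp only [Seidel, Matrix.conjTranspose_apply, Matrix.smul_apply, Matrix.map_apply,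
    Matrix.sub_apply, Matrix.transpose_apply, smul_eq_mul, star_mul', Complex.star_def,
    Complex.conj_I, map_sub, Complex.conj_ofReal, Complex.ofReal_sub]
  ring

lemma ortho_of_mainAngle_zero {m : ℕ} (hm : 0 < m) (S : Matrix (Fin m) (Fin m) ℂ) (θ : ℂ)
    (hb : mainAngleSq S θ = 0) (w : Fin m → ℂ) (hw : S *ᵥ w = θ • w) : ∑ i, w i = 0 := by
  have hproj : Submodule.orthogonalProjection (eigSpace S θ) (onesE m) = 0 := by
    unfold mainAngleSq at hb
    rcases div_eq_zero_iff.mp hb with h | h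
    · have h3 : ‖(Submodule.orthogonalProjection (eigSpace S θ) (onesE m) : EuclideanSpace ℂ (Fin m))‖ = 0 :=
        by nlinarith [norm_nonneg (Submodule.orthogonalProjection (eigSpace S θ) (onesE m) : EuclideanSpace ℂ (Fin m))]
      exact Subtype.ext (norm_eq_zero.mp h3)
    · exfalso; exact (Nat.cast_pos.mpr hm).ne' h
  have hones : onesE m ∈ (eigSpace S θ)ᗮ := Submodule.orthogonalProjectionOnto_eq_zero_iff.mp hproj
  set e := (WithLp.equiv 2 (Fin m → ℂ)).symm with he
  have hwmem : e w ∈ eigSpace S θ := by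
    rw [eigSpace, Module.End.mem_eigenspace_iff, Matrix.toEuclideanLin_apply]
    have : (e w).ofLp = w := rfl
    rw [this, hw]
    rfl
  have h0 : (inner ℂ (e w) (onesE m) : ℂ) = 0 := by
    rw [Submodule.mem_orthogonal] at hones
    exact hones (e w) hwmem
  rw [EuclideanSpace.inner_eq_star_dotProduct] at h0
  have h1 : star (∑ i, w i) = 0 := by
    rw [star_sum]
    simpa [dotProduct, onesE, he] using h0
  simpa using congrArg star h1

lemma key_spectral {m k : ℕ} (S : Matrix (Fin m) (Fin m) ℂ) (r nc : ℂ)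
    (hS : S.IsHermitian) (hnc : nc = r * r) (hncr : star nc = nc) (hr0 : r ≠ 0)
    (hCH : (S^2 - nc • 1)^(2*k) * (S^2 - 1) = 0)
    (hor1 : ∀ w : Fin m → ℂ, S *ᵥ w = r • w → ∑ i, w i = 0)
    (hor2 : ∀ w : Fin m → ℂ, S *ᵥ w = (-r) • w → ∑ i, w i = 0) :
    (S^2 - 1) *ᵥ (fun _ => (1:ℂ)) = 0 := by
  set ones : Fin m → ℂ := fun _ => (1:ℂ) with hones
  set u : Fin m → ℂ := (S^2 - 1) *ᵥ ones with hu
  show u = 0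
  rcases Nat.eq_zero_or_pos k with hk | hk
  · subst hk
    simp only [Nat.mul_zero, pow_zero, one_mul] at hCH
    rw [hu, hCH, zero_mulVec]
  · have hMherm : (S^2 - nc • 1).IsHermitian := by
      apply Matrix.IsHermitian.sub (hS.pow 2)
      unfold Matrix.IsHermitian
      rw [Matrix.conjTranspose_smul, Matrix.conjTranspose_one, hncr]
    have hMk : (S^2 - nc • 1)^(2*k) *ᵥ u = 0 := by
      rw [hu, mulVec_mulVec, hCH, zero_mulVec]
    have hMu : (S^2 - nc • 1) *ᵥ u = 0 := by
      have h2k : 2*k = (2*k-1)+1 := by omega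
      rw [h2k] at hMk
      exact herm_descent hMherm _ _ hMk
    have hS2u : (S^2) *ᵥ u = nc • u := by
      have := hMu
      rw [Matrix.sub_mulVec] at this
      have h1 : (nc • (1:Matrix (Fin m) (Fin m) ℂ)) *ᵥ u = nc • u := by
        rw [Matrix.smul_mulVec, Matrix.one_mulVec]
      rw [h1] at this
      linear_combination (norm := module) this
    set w : Fin m → ℂ := S *ᵥ u with hw
    have hSw : S *ᵥ w = (r*r) • u := by
      rw [hw, mulVec_mulVec, ← sq, hS2u, hnc]
    set up : Fin m → ℂ := (2*r)⁻¹ • (w + r • u) with hup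
    set um : Fin m → ℂ := (2*r)⁻¹ • (r • u - w) with hum
    have h2r : (2*r) ≠ 0 := by simp [hr0]
    have hup_eig : S *ᵥ up = r • up := by
      rw [hup, Matrix.mulVec_smul, Matrix.mulVec_add, Matrix.mulVec_smul, hSw, hw]
      match_scalars <;> ring
    have hum_eig : S *ᵥ um = (-r) • um := by
      rw [hum, Matrix.mulVec_smul, Matrix.mulVec_sub, Matrix.mulVec_smul, hSw, hw]
      match_scalars <;> ring
    have hsum_up : ∑ i, up i = 0 := hor1 up hup_eig
    have hsum_um : ∑ i, um i = 0 := hor2 um hum_eig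
    have huu : up + um = u := by
      rw [hup, hum]
      have : (2*r)⁻¹ • (w + r • u) + (2*r)⁻¹ • (r • u - w) = ((2*r)⁻¹ * (2*r)) • u := by
        match_scalars <;> ring
      rw [this, inv_mul_cancel₀ h2r, one_smul]
    have hsumu : ∑ i, u i = 0 := by
      rw [← huu]
      simp [Pi.add_apply, Finset.sum_add_distrib, hsum_up, hsum_um]
    apply cx_dot_zero
    have hBu : (S^2 - 1) *ᵥ u = (nc - 1) • u := by
      rw [Matrix.sub_mulVec, hS2u, Matrix.one_mulVec]
      match_scalars <;> ring
    have hBherm : (S^2 - 1).IsHermitian := by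
      apply Matrix.IsHermitian.sub (hS.pow 2) Matrix.isHermitian_one
    calc star u ⬝ᵥ u = star ((S^2-1) *ᵥ ones) ⬝ᵥ u := by rw [← hu]
      _ = (star ones ᵥ* (S^2-1)ᴴ) ⬝ᵥ u := by rw [star_mulVec]
      _ = star ones ⬝ᵥ ((S^2-1)ᴴ *ᵥ u) := by rw [← dotProduct_mulVec]
      _ = star ones ⬝ᵥ ((nc - 1) • u) := by rw [hBherm.eq, hBu]
      _ = (nc - 1) * ∑ i, u i := by
          simp [dotProduct, hones, Finset.mul_sum]
      _ = 0 := by rw [hsumu, mul_zero]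

lemma real_endgame {k : ℕ} (A : Matrix (Fin (4*k+2)) (Fin (4*k+2)) ℝ) (hA : IsTournament A)
    (h2 : ((A - Aᵀ)*(A - Aᵀ)) *ᵥ (fun _ => (1:ℝ)) = fun _ => (-1:ℝ)) :
    (Finset.univ.filter fun i => A.mulVec (fun _ => 1) i = (2 * k + 1 : ℝ)).card = 2 * k + 1 ∧
    (Finset.univ.filter fun i => A.mulVec (fun _ => 1) i = (2 * k : ℝ)).card = 2 * k + 1 := by
  set D := A - Aᵀ with hD
  set v : Fin (4*k+2) → ℝ := D *ᵥ (fun _ => 1) with hv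
  have hDT : Dᵀ = -D := by
    rw [hD, Matrix.transpose_sub, Matrix.transpose_transpose, neg_sub]
  have hDv : D *ᵥ v = fun _ => (-1:ℝ) := by rw [hv, mulVec_mulVec]; exact h2
  have hvv : ∑ i, v i * v i = (4*(k:ℝ)+2) := by
    calc ∑ i, v i * v i = (D *ᵥ (fun _ => (1:ℝ))) ⬝ᵥ v := by rw [hv]; rfl
      _ = ((fun _ => (1:ℝ)) ᵥ* Dᵀ) ⬝ᵥ v := by rw [Matrix.vecMul_transpose]
      _ = (fun _ => (1:ℝ)) ⬝ᵥ (Dᵀ *ᵥ v) := by rw [← dotProduct_mulVec]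
      _ = (fun _ => (1:ℝ)) ⬝ᵥ (-(D *ᵥ v)) := by rw [hDT, Matrix.neg_mulVec]
      _ = (fun _ => (1:ℝ)) ⬝ᵥ (fun _ => (1:ℝ)) := by rw [hDv]; congr 1; funext i; norm_num
      _ = (4*(k:ℝ)+2) := by
          simp [dotProduct]
  have hone : ∀ i j : Fin (4*k+2), A i j + A j i = 1 - (if i = j then (1:ℝ) else 0) := by
    intro i j
    have h := congrFun (congrFun hA.2.2 i) j
    simpa [Matrix.add_apply, Matrix.transpose_apply, Matrix.sub_apply, Matrix.one_apply] using h
  have hvf : ∀ i, v i = 2 * (A.mulVec (fun _ => 1)) i - (4*(k:ℝ)+1) := by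
    intro i
    have e1 : v i = ∑ j, (A i j - A j i) := by
      rw [hv]; simp [Matrix.mulVec, dotProduct, hD, Matrix.sub_apply]
    have e2 : (A.mulVec (fun _ => 1)) i = ∑ j, A i j := by
      simp [Matrix.mulVec, dotProduct]
    rw [e1, e2]
    have e3 : ∀ j, A i j - A j i = 2 * A i j - 1 + (if i = j then (1:ℝ) else 0) := by
      intro j; have := hone i j; linarith [this]
    rw [Finset.sum_congr rfl (fun j _ => e3 j)]
    rw [Finset.sum_add_distrib, Finset.sum_sub_distrib, ← Finset.mul_sum]
    simp [Finset.sum_ite_eq]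
    push_cast; ring
  have hd : ∀ i, ∃ c : ℕ, (A.mulVec (fun _ => 1)) i = c := by
    intro i
    refine ⟨(Finset.univ.filter fun j => A i j = 1).card, ?_⟩
    have e2 : (A.mulVec (fun _ => 1)) i = ∑ j, A i j := by
      simp [Matrix.mulVec, dotProduct]
    rw [e2]
    rw [Finset.sum_congr rfl (fun j _ => show A i j = if A i j = 1 then (1:ℝ) else 0 by
      rcases hA.1 i j with h | h <;> simp [h])]
    simp [Finset.sum_boole]
  have hv1 : ∀ i, 1 ≤ v i * v i := by
    intro i
    obtain ⟨c, hc⟩ := hd i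
    have := hvf i
    rw [hc] at this
    rcases le_or_gt c (2*k) with h | h
    · have hcr : (c:ℝ) ≤ 2*k := by exact_mod_cast h
      nlinarith
    · have hcr : (2*(k:ℝ)+1) ≤ c := by exact_mod_cast h
      nlinarith
  have hveq : ∀ i, v i * v i = 1 := by
    have hsz : ∑ i, (v i * v i - 1) = 0 := by
      rw [Finset.sum_sub_distrib, hvv]
      simp
    intro i
    have := (Finset.sum_eq_zero_iff_of_nonneg
      (fun i _ => sub_nonneg.mpr (hv1 i))).mp hsz i (Finset.mem_univ i)
    linarith
  have hpm : ∀ i, v i = 1 ∨ v i = -1 := fun i => mul_self_eq_one_iff.mp (hveq i)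
  have hsumv : ∑ i, v i = 0 := by
    have e : ∑ i, v i = (∑ i, ∑ j, A i j) - (∑ i, ∑ j, A j i) := by
      rw [hv]
      simp [Matrix.mulVec, dotProduct, hD, Matrix.sub_apply, Finset.sum_sub_distrib]
    rw [e, Finset.sum_comm]
    exact sub_self _
  set P := Finset.univ.filter (fun i => v i = 1) with hP
  set Q := Finset.univ.filter (fun i => v i = -1) with hQ
  have hQP : Q = Finset.univ.filter (fun i => ¬ (v i = 1)) := by
    apply Finset.filter_congr
    intro i _
    rcases hpm i with h | h <;> simp [h] <;> norm_num
  have hcardPQ : P.card + Q.card = 4*k+2 := by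
    rw [hP, hQP]
    rw [Finset.card_filter_add_card_filter_not]
    simp
  have hsplit : ∑ i ∈ P, v i + ∑ i ∈ Q, v i = 0 := by
    rw [hP, hQP, Finset.sum_filter_add_sum_filter_not]
    exact hsumv
  have hPsum : ∑ i ∈ P, v i = (P.card : ℝ) := by
    rw [Finset.sum_congr rfl (fun i hi => (Finset.mem_filter.mp hi).2)]
    simp
    rfl
  have hQsum : ∑ i ∈ Q, v i = -(Q.card : ℝ) := by
    rw [Finset.sum_congr rfl (fun i hi => (Finset.mem_filter.mp hi).2)]
    simp
    rfl
  have hPQeq : P.card = Q.card := by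
    have : (P.card : ℝ) = Q.card := by rw [hPsum, hQsum] at hsplit; linarith
    exact_mod_cast this
  have hPcard : P.card = 2*k+1 := by omega
  have hQcard : Q.card = 2*k+1 := by omega
  constructor
  · rw [show (Finset.univ.filter fun i => A.mulVec (fun _ => 1) i = (2 * k + 1 : ℝ)) = P from ?_]
    · exact hPcard
    · rw [hP]; apply Finset.filter_congr; intro i _
      rw [hvf i]
      constructor <;> intro h <;> linarith
  · rw [show (Finset.univ.filter fun i => A.mulVec (fun _ => 1) i = (2 * k : ℝ)) = Q from ?_]
    · exact hQcard
    · rw [hQ]; apply Finset.filter_congr; intro i _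
      rw [hvf i]
      constructor <;> intro h <;> linarith

theorem spectrum_implies_almost_regular {k : ℕ}
    (A₁ : Matrix (Fin (4 * k + 2)) (Fin (4 * k + 2)) ℝ)
    (hA₁ : IsTournament A₁)
    (hm1 : (Seidel A₁).charpoly.rootMultiplicity (Real.sqrt (4 * k + 3) : ℂ) = 2 * k)
    (hm2 : (Seidel A₁).charpoly.rootMultiplicity 1 = 1)
    (hm3 : (Seidel A₁).charpoly.rootMultiplicity (-1) = 1)
    (hm4 : (Seidel A₁).charpoly.rootMultiplicity (-(Real.sqrt (4 * k + 3) : ℂ)) = 2 * k)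
    (hb1 : mainAngleSq (Seidel A₁) (Real.sqrt (4 * k + 3) : ℂ) = 0)
    (hb2 : mainAngleSq (Seidel A₁) 1 = 1 / 2)
    (hb3 : mainAngleSq (Seidel A₁) (-1) = 1 / 2)
    (hb4 : mainAngleSq (Seidel A₁) (-(Real.sqrt (4 * k + 3) : ℂ)) = 0) :
    (Finset.univ.filter fun i => A₁.mulVec (fun _ => 1) i = (2 * k + 1 : ℝ)).card = 2 * k + 1 ∧
    (Finset.univ.filter fun i => A₁.mulVec (fun _ => 1) i = (2 * k : ℝ)).card = 2 * k + 1 := by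
  set S := Seidel A₁ with hS
  set rr : ℝ := Real.sqrt (4 * (k:ℝ) + 3) with hrr
  set r : ℂ := (rr : ℂ) with hr
  have hrr_pos : 0 < rr := Real.sqrt_pos.mpr (by positivity)
  have hrr_gt1 : 1 < rr := by
    rw [hrr, show (1:ℝ) = Real.sqrt 1 from Real.sqrt_one.symm]
    apply Real.sqrt_lt_sqrt (by norm_num)
    have : (0:ℝ) ≤ k := Nat.cast_nonneg k
    linarith
  have hr1 : r ≠ 1 := by
    rw [hr]
    intro h
    rw [Complex.ofReal_eq_one] at h
    linarith
  have hr2 : r ≠ -1 := by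
    rw [hr]
    intro h
    have : rr = -1 := by exact_mod_cast h
    linarith
  have hr0 : r ≠ 0 := by
    rw [hr]
    exact Complex.ofReal_ne_zero.mpr hrr_pos.ne'
  set nc : ℂ := ((4 * (k:ℝ) + 3 : ℝ) : ℂ) with hncdef
  have hnc : nc = r * r := by
    rw [hncdef, hr, ← Complex.ofReal_mul, Real.mul_self_sqrt (by positivity)]
  have hncr : star nc = nc := by
    rw [hncdef]
    simp [Complex.star_def, Complex.conj_ofReal]
  have hH : S.IsHermitian := seidel_herm A₁
  have hCH : (S^2 - nc • 1)^(2*k) * (S^2 - 1) = 0 := by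
    rw [hnc]
    exact charpoly_factor S r hr1 hr2 hr0 hm1 hm2 hm3 hm4
  have hor1 : ∀ w : Fin (4*k+2) → ℂ, S *ᵥ w = r • w → ∑ i, w i = 0 :=
    fun w hw => ortho_of_mainAngle_zero (by omega) S r hb1 w hw
  have hor2 : ∀ w : Fin (4*k+2) → ℂ, S *ᵥ w = (-r) • w → ∑ i, w i = 0 :=
    fun w hw => ortho_of_mainAngle_zero (by omega) S (-r) hb4 w hw
  have hu0 : (S^2 - 1) *ᵥ (fun _ => (1:ℂ)) = 0 :=
    key_spectral S r nc hH hnc hncr hr0 hCH hor1 hor2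
  have hS2 : (S^2) *ᵥ (fun _ => (1:ℂ)) = (fun _ => (1:ℂ)) := by
    rw [Matrix.sub_mulVec, Matrix.one_mulVec] at hu0
    exact sub_eq_zero.mp hu0
  set Mc : Matrix (Fin (4*k+2)) (Fin (4*k+2)) ℂ := (A₁ - A₁ᵀ).map Complex.ofReal with hMc
  have hSS : S^2 = (Complex.I * Complex.I) • (Mc * Mc) := by
    rw [sq, hS, Seidel, Matrix.smul_mul, Matrix.mul_smul, smul_smul, hMc]
  rw [Complex.I_mul_I] at hSS
  have hMc2 : (Mc * Mc) *ᵥ (fun _ => (1:ℂ)) = fun _ => (-1:ℂ) := by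
    rw [hSS] at hS2
    rw [neg_one_smul, Matrix.neg_mulVec] at hS2
    funext i
    have := congrFun hS2 i
    simp only [Pi.neg_apply] at this ⊢
    linear_combination -this
  have hmap : Mc * Mc = ((A₁ - A₁ᵀ) * (A₁ - A₁ᵀ)).map Complex.ofReal := by
    rw [hMc]
    ext i j
    simp [Matrix.mul_apply, Matrix.map_apply]
  have hreal : ((A₁ - A₁ᵀ)*(A₁ - A₁ᵀ)) *ᵥ (fun _ => (1:ℝ)) = fun _ => (-1:ℝ) := by
    funext i
    apply Complex.ofReal_injective
    have h := congrFun hMc2 i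
    rw [hmap] at h
    simp only [Matrix.mulVec, dotProduct, Matrix.map_apply, mul_one] at h ⊢
    push_cast
    rw [h]
  exact real_endgame A₁ hA₁ hreal
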